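/- Repeated exponential tilting concentrates on the essential infimum: for ρ a probability density and R bounded measurable, the n-fold tilted density ρ_n = ρ e^{−nR}/∫ρe^{−nR} satisfies E_{ρ_n}[R] → ess inf_ρ R as n → ∞. -/

import Mathlib

open MeasureTheory Real Filter Topology

/-- Repeated exponential tilting concentrates on the essential infimum: for a
probability density `ρ` and bounded measurable `R`, the `n`-fold tilted density
`ρ_n = ρ e^{−nR} / ∫ ρ e^{−nR}` satisfies `E_{ρ_n}[R] → essinf_ρ R` as `n → ∞`,
where the essential infimum is taken with respect to the measure `ρ dμ`. -/
theorem repeated_tilting_concentrates_on_essInf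
    {X : Type*} [MeasurableSpace X] (μ : Measure X) (ρ R : X → ℝ)
    (hρm : Measurable ρ) (hRm : Measurable R)
    (hρ0 : ∀ x, 0 ≤ ρ x) (hρ1 : ∫ x, ρ x ∂μ = 1)
    (hRb : ∃ C, ∀ x, |R x| ≤ C)
    (hηpos : ∀ n : ℕ, 0 < ∫ x, ρ x * Real.exp (-(n : ℝ) * R x) ∂μ) :
    Tendsto (fun n : ℕ =>
        ∫ x, (ρ x * Real.exp (-(n : ℝ) * R x) /
          ∫ y, ρ y * Real.exp (-(n : ℝ) * R y) ∂μ) * R x ∂μ)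
      atTop (𝓝 (essInf R (μ.withDensity fun x => ENNReal.ofReal (ρ x)))) := by
  obtain ⟨C₀, hC₀⟩ := hRb
  set C := max C₀ 0 with hCdef
  have hC0 : (0:ℝ) ≤ C := le_max_right _ _
  have hRC : ∀ x, |R x| ≤ C := fun x => (hC₀ x).trans (le_max_left _ _)
  have hρint : Integrable ρ μ := by
    by_contra h
    rw [integral_undef h] at hρ1
    norm_num at hρ1
  set ν := μ.withDensity fun x => ENNReal.ofReal (ρ x) with hν
  have hνdef : ν = μ.withDensity (fun x => ((Real.toNNReal (ρ x) : NNReal) : ENNReal)) := rfl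
  haveI hprob : IsProbabilityMeasure ν := by
    constructor
    rw [hν, withDensity_apply _ MeasurableSet.univ, setLIntegral_univ,
      ← ofReal_integral_eq_lintegral_ofReal hρint (ae_of_all _ hρ0), hρ1, ENNReal.ofReal_one]
  have hν0 : ν ≠ 0 := hprob.ne_zero
  haveI : (ae ν).NeBot := ae_neBot.2 hν0
  -- conversion of integrals
  have hconv : ∀ g : X → ℝ, ∫ x, g x ∂ν = ∫ x, ρ x * g x ∂μ := by
    intro g
    rw [hνdef, integral_withDensity_eq_integral_smul hρm.real_toNNReal g]
    exact integral_congr_ae (ae_of_all _ fun x => by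
      simp [NNReal.smul_def, Real.coe_toNNReal _ (hρ0 x)])
  -- integrability of bounded measurable functions
  have hint : ∀ f : X → ℝ, Measurable f → ∀ B : ℝ, (∀ x, |f x| ≤ B) → Integrable f ν := by
    intro f hf B hB
    exact (integrable_const B).mono' hf.aestronglyMeasurable
      (ae_of_all _ fun x => by simpa [Real.norm_eq_abs] using hB x)
  have hexp_meas : ∀ n : ℕ, Measurable fun x => Real.exp (-(n:ℝ) * R x) :=
    fun n => (hRm.const_mul (-(n:ℝ))).exp
  have hexp_bd : ∀ (n : ℕ) x, Real.exp (-(n:ℝ) * R x) ≤ Real.exp ((n:ℝ) * C) := by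
    intro n x
    apply Real.exp_le_exp.2
    have h1 : -C ≤ R x := neg_le_of_abs_le (hRC x)
    nlinarith [Nat.cast_nonneg (α := ℝ) n]
  have hexp_int : ∀ n : ℕ, Integrable (fun x => Real.exp (-(n:ℝ) * R x)) ν := by
    intro n
    refine hint _ (hexp_meas n) (Real.exp ((n:ℝ) * C)) fun x => ?_
    rw [abs_of_pos (Real.exp_pos _)]
    exact hexp_bd n x
  have hexpR_int : ∀ n : ℕ, Integrable (fun x => Real.exp (-(n:ℝ) * R x) * R x) ν := by
    intro n
    refine hint _ ((hexp_meas n).mul hRm) (Real.exp ((n:ℝ) * C) * C) fun x => ?_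
    rw [abs_mul, abs_of_pos (Real.exp_pos _)]
    exact mul_le_mul (hexp_bd n x) (hRC x) (abs_nonneg _) (Real.exp_pos _).le
  set In : ℕ → ℝ := fun n => ∫ x, Real.exp (-(n:ℝ) * R x) ∂ν with hIn
  set Jn : ℕ → ℝ := fun n => ∫ x, Real.exp (-(n:ℝ) * R x) * R x ∂ν with hJn
  have hIpos : ∀ n, 0 < In n := by
    intro n
    rw [hIn]; dsimp only; rw [hconv]
    exact hηpos n
  -- rewrite the statement integrand
  have hE : ∀ n : ℕ, (∫ x, (ρ x * Real.exp (-(n : ℝ) * R x) /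
      ∫ y, ρ y * Real.exp (-(n : ℝ) * R y) ∂μ) * R x ∂μ) = Jn n / In n := by
    intro n
    have hInμ : In n = ∫ y, ρ y * Real.exp (-(n : ℝ) * R y) ∂μ := by
      rw [hIn]; dsimp only; rw [hconv]
    have hJnμ : Jn n = ∫ x, ρ x * (Real.exp (-(n : ℝ) * R x) * R x) ∂μ := by
      rw [hJn]; dsimp only; rw [hconv]
    rw [hJnμ, hInμ]
    rw [← integral_div]
    congr 1
    ext x
    ring
  set m := essInf R ν with hm
  -- a.e. and bound facts
  have hbddge : IsBoundedUnder (· ≥ ·) (ae ν) R :=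
    isBoundedUnder_of ⟨-C, fun x => neg_le_of_abs_le (hRC x)⟩
  have hbddle : IsBoundedUnder (· ≤ ·) (ae ν) R :=
    isBoundedUnder_of ⟨C, fun x => le_of_abs_le (hRC x)⟩
  have hcob : IsCoboundedUnder (· ≥ ·) (ae ν) R := hbddle.isCoboundedUnder_ge
  have hmle : ∀ᵐ x ∂ν, m ≤ R x := ae_essInf_le hbddge
  have hmC : -C ≤ m :=
    le_liminf_of_le hcob (ae_of_all _ fun x => neg_le_of_abs_le (hRC x))
  -- difference identity
  have hdiff : ∀ n : ℕ, Jn n - m * In n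
      = ∫ x, (Real.exp (-(n:ℝ) * R x) * R x - Real.exp (-(n:ℝ) * R x) * m) ∂ν := by
    intro n
    rw [integral_sub (hexpR_int n) ((hexp_int n).mul_const m), integral_mul_const]
    show Jn n - m * In n = Jn n - In n * m
    ring
  have hnum0 : ∀ n : ℕ, 0 ≤ Jn n - m * In n := by
    intro n
    rw [hdiff n]
    refine integral_nonneg_of_ae ?_
    filter_upwards [hmle] with x hx
    simp only [Pi.zero_apply]
    have h := mul_nonneg (Real.exp_pos (-(n:ℝ) * R x)).le (sub_nonneg.2 hx)
    nlinarith
  rw [Metric.tendsto_atTop]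
  intro ε hε
  set a := ε / 3 with hadef
  have ha : 0 < a := by positivity
  -- positive mass near the essential infimum
  set A : Set X := {x | R x < m + a / 2} with hA
  have hAmeas : MeasurableSet A := measurableSet_lt hRm measurable_const
  have hAνpos : ν A ≠ 0 := by
    intro h
    have hae : ∀ᵐ x ∂ν, m + a / 2 ≤ R x := by
      rw [ae_iff]
      simpa [hA, not_le] using h
    have : m + a / 2 ≤ m := le_liminf_of_le hcob hae
    linarith
  set δ := (ν A).toReal with hδdef
  have hδpos : 0 < δ := ENNReal.toReal_pos hAνpos (measure_ne_top ν A)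
  -- lower bound on the denominator
  have hIlow : ∀ n : ℕ, Real.exp (-(n:ℝ) * (m + a / 2)) * δ ≤ In n := by
    intro n
    have h2 : Real.exp (-(n:ℝ) * (m + a / 2)) * δ
        ≤ ∫ x in A, Real.exp (-(n:ℝ) * R x) ∂ν := by
      refine setIntegral_ge_of_const_le_real hAmeas (measure_ne_top ν A) (fun x hx => ?_)
        (hexp_int n).integrableOn
      apply Real.exp_le_exp.2
      have hx' : R x ≤ m + a / 2 := le_of_lt hx
      nlinarith [Nat.cast_nonneg (α := ℝ) n]
    have h1 : ∫ x in A, Real.exp (-(n:ℝ) * R x) ∂ν ≤ In n :=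
      setIntegral_le_integral (hexp_int n) (ae_of_all _ fun x => (Real.exp_pos _).le)
    linarith
  -- upper bound on the numerator
  have hNum : ∀ n : ℕ, Jn n - m * In n
      ≤ a * In n + 2 * C * Real.exp (-(n:ℝ) * (m + a)) := by
    intro n
    rw [hdiff n]
    have hb : ∀ᵐ x ∂ν, Real.exp (-(n:ℝ) * R x) * R x - Real.exp (-(n:ℝ) * R x) * m
        ≤ a * Real.exp (-(n:ℝ) * R x) + 2 * C * Real.exp (-(n:ℝ) * (m + a)) := by
      filter_upwards [hmle] with x hx
      have hepos := (Real.exp_pos (-(n:ℝ) * R x)).le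
      have he2 := (Real.exp_pos (-(n:ℝ) * (m + a))).le
      rcases le_or_gt (R x) (m + a) with hc | hc
      · nlinarith
      · have h1 : Real.exp (-(n:ℝ) * R x) ≤ Real.exp (-(n:ℝ) * (m + a)) := by
          apply Real.exp_le_exp.2
          nlinarith [Nat.cast_nonneg (α := ℝ) n]
        have h2 : R x - m ≤ 2 * C := by
          have := le_of_abs_le (hRC x)
          linarith
        nlinarith
    have hIleft : Integrable
        (fun x => Real.exp (-(n:ℝ) * R x) * R x - Real.exp (-(n:ℝ) * R x) * m) ν :=
      (hexpR_int n).sub ((hexp_int n).mul_const m)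
    have hIright : Integrable
        (fun x => a * Real.exp (-(n:ℝ) * R x) + 2 * C * Real.exp (-(n:ℝ) * (m + a))) ν :=
      ((hexp_int n).const_mul a).add (integrable_const _)
    calc ∫ x, (Real.exp (-(n:ℝ) * R x) * R x - Real.exp (-(n:ℝ) * R x) * m) ∂ν
        ≤ ∫ x, (a * Real.exp (-(n:ℝ) * R x) + 2 * C * Real.exp (-(n:ℝ) * (m + a))) ∂ν :=
          integral_mono_ae hIleft hIright hb
      _ = a * In n + 2 * C * Real.exp (-(n:ℝ) * (m + a)) := by
          rw [integral_add ((hexp_int n).const_mul a) (integrable_const _),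
            integral_const_mul, integral_const]
          simp [hIn]
  -- the error term tends to zero
  have htend : Tendsto (fun n : ℕ => (2 * C / δ) * Real.exp (-(n:ℝ) * (a / 2)))
      atTop (𝓝 0) := by
    have h0 : Tendsto (fun n : ℕ => (n:ℝ) * (a / 2)) atTop atTop :=
      Tendsto.atTop_mul_const (by positivity : 0 < a / 2) (tendsto_natCast_atTop_atTop (R := ℝ))
    have h1 : Tendsto (fun n : ℕ => -(n:ℝ) * (a / 2)) atTop atBot := by
      simpa [neg_mul] using tendsto_neg_atBot_iff.2 h0
    have h2 : Tendsto (fun n : ℕ => Real.exp (-(n:ℝ) * (a / 2))) atTop (𝓝 0) :=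
      Real.tendsto_exp_atBot.comp h1
    simpa using h2.const_mul (2 * C / δ)
  have hev : ∀ᶠ n : ℕ in atTop, (2 * C / δ) * Real.exp (-(n:ℝ) * (a / 2)) < a :=
    htend.eventually_lt_const ha
  obtain ⟨N, hN⟩ := eventually_atTop.1 hev
  refine ⟨N, fun n hn => ?_⟩
  rw [hE n, Real.dist_eq]
  have hInpos := hIpos n
  have hdivnn : 0 ≤ Jn n / In n - m := by
    rw [div_sub' (ne_of_gt hInpos)]
    exact div_nonneg (by linarith [hnum0 n]) hInpos.le
  rw [abs_of_nonneg hdivnn]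
  -- main estimate
  have hL : 0 < Real.exp (-(n:ℝ) * (m + a / 2)) * δ := by positivity
  have hKL : 2 * C * Real.exp (-(n:ℝ) * (m + a)) / (Real.exp (-(n:ℝ) * (m + a / 2)) * δ)
      = (2 * C / δ) * Real.exp (-(n:ℝ) * (a / 2)) := by
    have hsplit : Real.exp (-(n:ℝ) * (m + a))
        = Real.exp (-(n:ℝ) * (a / 2)) * Real.exp (-(n:ℝ) * (m + a / 2)) := by
      rw [← Real.exp_add]
      ring_nf
    rw [hsplit]
    field_simp
  have hstep1 : Jn n / In n - m ≤ a + (2 * C / δ) * Real.exp (-(n:ℝ) * (a / 2)) := by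
    rw [div_sub' (ne_of_gt hInpos), div_le_iff₀ hInpos]
    have hK0 : 0 ≤ 2 * C * Real.exp (-(n:ℝ) * (m + a)) := by positivity
    have h3 : 2 * C * Real.exp (-(n:ℝ) * (m + a))
        ≤ (2 * C / δ) * Real.exp (-(n:ℝ) * (a / 2)) * In n := by
      rw [← hKL, div_mul_eq_mul_div, le_div_iff₀ hL]  -- K ≤ K/L * In ↔ K*L ≤ K*In
      exact mul_le_mul_of_nonneg_left (hIlow n) hK0
    calc Jn n - In n * m ≤ a * In n + 2 * C * Real.exp (-(n:ℝ) * (m + a)) := by linarith [hNum n]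
      _ ≤ a * In n + (2 * C / δ) * Real.exp (-(n:ℝ) * (a / 2)) * In n := by linarith
      _ = (a + (2 * C / δ) * Real.exp (-(n:ℝ) * (a / 2))) * In n := by ring
  have := hN n hn
  calc Jn n / In n - m ≤ a + (2 * C / δ) * Real.exp (-(n:ℝ) * (a / 2)) := hstep1
    _ < a + a := by linarith
    _ < ε := by rw [hadef]; linarith
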